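/- For any d ≥ 4 and n ≥ 2, the ideal I = (x_0^d, x_1^d, …, x_n^d) + x_1·(x_1,…,x_n)^{d-1} + x_2·(x_2,…,x_n)^{d-1} + ⋯ + x_{n-2}·(x_{n-2},x_{n-1},x_n)^{d-1} + x_0^3·(x_{n-1},x_n)^{d-3} in k[x_0,…,x_n] has a minimal generating set of exactly binomial(n+d−1, n−1) monomials of degree d. -/

import Mathlib

open Finset

private lemma card_tuples_sum (k m : ℕ) :
    {b : Fin k → ℕ | ∑ j, b j = m}.ncard = (k + m - 1).choose m := by
  rw [← Nat.card_coe_set_eq]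
  have : Nat.card {b : Fin k → ℕ | ∑ j, b j = m} = Nat.card {b : Fin k → ℕ // ∑ j, b j = m} := rfl
  rw [this, ← Nat.card_congr (Sym.equivNatSumOfFintype (Fin k) m), Nat.card_eq_fintype_card,
    Sym.card_sym_eq_choose, Fintype.card_fin]

private lemma sum_pair_support {k : ℕ} {a : Fin k → ℕ} {p q : Fin k} (hpq : p ≠ q)
    (h : ∀ j, a j ≠ 0 → j = p ∨ j = q) : ∑ j, a j = a p + a q := by
  classical
  rw [← Finset.sum_pair hpq]
  apply (Finset.sum_subset (Finset.subset_univ _) _).symm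
  intro x _ hx
  by_contra hax
  rcases h x hax with rfl | rfl <;> simp at hx

private lemma sum_triple_support {k : ℕ} {a : Fin k → ℕ} {p q r : Fin k} (hpq : p ≠ q)
    (hpr : p ≠ r) (hqr : q ≠ r)
    (h : ∀ j, a j ≠ 0 → j = p ∨ j = q ∨ j = r) : ∑ j, a j = a p + a q + a r := by
  classical
  have h3 : ∑ j ∈ ({p, q, r} : Finset (Fin k)), a j = a p + a q + a r := by
    rw [Finset.sum_insert (by simp [hpq, hpr]), Finset.sum_pair hqr, add_assoc]
  rw [← h3]
  apply (Finset.sum_subset (Finset.subset_univ _) _).symm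
  intro x _ hx
  by_contra hax
  rcases h x hax with rfl | rfl | rfl <;> simp at hx

-- card of D
private lemma card_D (n d : ℕ) (hn : 2 ≤ n) (hd : 4 ≤ d) :
    {a : Fin (n + 1) → ℕ | (∑ j, a j = d) ∧ ∀ j, a j ≠ 0 → n - 1 ≤ (j : ℕ)}.ncard = d + 1 := by
  classical
  set p1 : Fin (n + 1) := ⟨n - 1, by omega⟩ with hp1
  set p2 : Fin (n + 1) := ⟨n, by omega⟩ with hp2
  have hv1 : (p1 : ℕ) = n - 1 := by rw [hp1]
  have hv2 : (p2 : ℕ) = n := by rw [hp2]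
  have hp12 : p1 ≠ p2 := by
    intro h
    rw [Fin.ext_iff, hv1, hv2] at h
    omega
  have hbig : ∀ j : Fin (n + 1), n - 1 ≤ (j : ℕ) → j = p1 ∨ j = p2 := by
    intro j hj
    have := j.isLt
    rcases Nat.lt_or_ge (j : ℕ) n with h | h
    · left; exact Fin.ext (by rw [hv1]; omega)
    · right; exact Fin.ext (by rw [hv2]; omega)
  set f : ℕ → (Fin (n + 1) → ℕ) :=
    fun i => fun j => if j = p1 then i else if j = p2 then d - i else 0 with hf
  have hfD : {a : Fin (n + 1) → ℕ | (∑ j, a j = d) ∧ ∀ j, a j ≠ 0 → n - 1 ≤ (j : ℕ)}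
      = f '' ↑(Finset.range (d + 1)) := by
    ext a
    constructor
    · rintro ⟨hsum, hsupp⟩
      have hsupp2 : ∀ j, a j ≠ 0 → j = p1 ∨ j = p2 := fun j hj => hbig j (hsupp j hj)
      have hps : a p1 + a p2 = d := by rw [← sum_pair_support hp12 hsupp2, hsum]
      refine ⟨a p1, by simp; omega, ?_⟩
      funext j
      rcases eq_or_ne j p1 with rfl | h1
      · simp [hf]
      rcases eq_or_ne j p2 with rfl | h2
      · have : f (a p1) p2 = d - a p1 := by simp [hf, Ne.symm hp12]
        rw [this]; omega
      · have : a j = 0 := by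
          by_contra h
          rcases hsupp2 j h with h' | h'
          · exact h1 h'
          · exact h2 h'
        simp [hf, h1, h2, this]
    · rintro ⟨i, hi, rfl⟩
      simp only [Finset.coe_range, Set.mem_Iio] at hi
      constructor
      · have hsupp' : ∀ j, f i j ≠ 0 → j = p1 ∨ j = p2 := by
          intro j hj
          by_contra h
          push_neg at h
          simp [hf, h.1, h.2] at hj
        have e1 : f i p1 = i := by simp [hf]
        have e2 : f i p2 = d - i := by simp [hf, Ne.symm hp12]
        rw [sum_pair_support hp12 hsupp', e1, e2]; omega
      · intro j hj
        by_contra h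
        push_neg at h
        have h1 : j ≠ p1 := by intro hh; rw [hh, hv1] at h; omega
        have h2 : j ≠ p2 := by intro hh; rw [hh, hv2] at h; omega
        simp [hf, h1, h2] at hj
  rw [hfD, Set.ncard_image_of_injOn, Set.ncard_coe_finset, Finset.card_range]
  intro i _ i' _ hii
  have := congrFun hii p1
  simpa [hf] using this

-- card of C
private lemma card_C (n d : ℕ) (hn : 2 ≤ n) (hd : 4 ≤ d) :
    {a : Fin (n + 1) → ℕ | (∑ j, a j = d) ∧ a 0 = 3 ∧
        ∀ j, a j ≠ 0 → j = 0 ∨ n - 1 ≤ (j : ℕ)}.ncard = d - 2 := by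
  classical
  set p1 : Fin (n + 1) := ⟨n - 1, by omega⟩ with hp1
  set p2 : Fin (n + 1) := ⟨n, by omega⟩ with hp2
  have hv1 : (p1 : ℕ) = n - 1 := by rw [hp1]
  have hv2 : (p2 : ℕ) = n := by rw [hp2]
  have hp12 : p1 ≠ p2 := by
    intro h
    rw [Fin.ext_iff, hv1, hv2] at h
    omega
  have hp01 : (0 : Fin (n + 1)) ≠ p1 := by
    intro h
    rw [Fin.ext_iff, Fin.val_zero, hv1] at h
    omega
  have hp02 : (0 : Fin (n + 1)) ≠ p2 := by
    intro h
    rw [Fin.ext_iff, Fin.val_zero, hv2] at h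
    omega
  have hbig : ∀ j : Fin (n + 1), n - 1 ≤ (j : ℕ) → j = p1 ∨ j = p2 := by
    intro j hj
    have := j.isLt
    rcases Nat.lt_or_ge (j : ℕ) n with h | h
    · left; exact Fin.ext (by rw [hv1]; omega)
    · right; exact Fin.ext (by rw [hv2]; omega)
  set g : ℕ → (Fin (n + 1) → ℕ) :=
    fun i => fun j => if j = 0 then 3 else if j = p1 then i else if j = p2 then d - 3 - i else 0
    with hg
  have hgC : {a : Fin (n + 1) → ℕ | (∑ j, a j = d) ∧ a 0 = 3 ∧
      ∀ j, a j ≠ 0 → j = 0 ∨ n - 1 ≤ (j : ℕ)} = g '' ↑(Finset.range (d - 2)) := by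
    ext a
    constructor
    · rintro ⟨hsum, ha0, hsupp⟩
      have hsupp2 : ∀ j, a j ≠ 0 → j = 0 ∨ j = p1 ∨ j = p2 := by
        intro j hj
        rcases hsupp j hj with h | h
        · exact Or.inl h
        · exact Or.inr (hbig j h)
      have hps : 3 + a p1 + a p2 = d := by
        rw [← ha0, ← sum_triple_support hp01 hp02 hp12 hsupp2, hsum]
      refine ⟨a p1, by simp; omega, ?_⟩
      funext j
      rcases eq_or_ne j 0 with rfl | h0
      · simp [hg, ha0]
      rcases eq_or_ne j p1 with rfl | h1
      · simp [hg, Ne.symm hp01]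
      rcases eq_or_ne j p2 with rfl | h2
      · have : g (a p1) p2 = d - 3 - a p1 := by simp [hg, Ne.symm hp02, Ne.symm hp12]
        rw [this]; omega
      · have : a j = 0 := by
          by_contra h
          rcases hsupp2 j h with h' | h' | h'
          · exact h0 h'
          · exact h1 h'
          · exact h2 h'
        simp [hg, h0, h1, h2, this]
    · rintro ⟨i, hi, rfl⟩
      simp only [Finset.coe_range, Set.mem_Iio] at hi
      have hsupp' : ∀ j, g i j ≠ 0 → j = 0 ∨ j = p1 ∨ j = p2 := by
        intro j hj
        by_contra h
        push_neg at h
        simp [hg, h.1, h.2.1, h.2.2] at hj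
      have e0 : g i 0 = 3 := by simp [hg]
      have e1 : g i p1 = i := by simp [hg, Ne.symm hp01]
      have e2 : g i p2 = d - 3 - i := by simp [hg, Ne.symm hp02, Ne.symm hp12]
      refine ⟨?_, e0, ?_⟩
      · rw [sum_triple_support hp01 hp02 hp12 hsupp', e0, e1, e2]; omega
      · intro j hj
        rcases hsupp' j hj with h | h | h
        · exact Or.inl h
        · right; rw [h, hv1]
        · right; rw [h, hv2]; omega
  rw [hgC, Set.ncard_image_of_injOn, Set.ncard_coe_finset, Finset.card_range]
  intro i _ i' _ hii
  have := congrFun hii p1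
  simpa [hg, Ne.symm hp01] using this

-- card of T
private lemma card_T (n d : ℕ) (hn : 2 ≤ n) :
    {a : Fin (n + 1) → ℕ | (∑ j, a j = d) ∧ a 0 = 0}.ncard = (n + d - 1).choose (n - 1) := by
  classical
  have hTim : {a : Fin (n + 1) → ℕ | (∑ j, a j = d) ∧ a 0 = 0}
      = (fun b : Fin n → ℕ => (Fin.cons 0 b : Fin (n + 1) → ℕ)) '' {b : Fin n → ℕ | ∑ j, b j = d} := by
    ext a
    constructor
    · rintro ⟨hsum, ha0⟩
      refine ⟨Fin.tail a, ?_, ?_⟩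
      · have := Fin.sum_univ_succ a
        rw [ha0, zero_add] at this
        rw [Set.mem_setOf_eq, ← hsum, this]
        rfl
      · show Fin.cons 0 (Fin.tail a) = a
        conv_lhs => rw [← ha0]
        exact Fin.cons_self_tail a
    · rintro ⟨b, hb, rfl⟩
      constructor
      · show ∑ j, Fin.cons (0:ℕ) b j = d
        rw [Fin.sum_univ_succ]
        simpa using hb
      · simp
  have hinj : Function.Injective (fun b : Fin n → ℕ => (Fin.cons 0 b : Fin (n + 1) → ℕ)) := by
    intro b b' h
    funext i
    have := congrFun h i.succ
    simpa using this
  rw [hTim, Set.ncard_image_of_injective _ hinj, card_tuples_sum]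
  rw [← Nat.choose_symm (by omega : n - 1 ≤ n + d - 1)]
  congr 1
  omega

theorem stmt_11 (n d : ℕ) (hn : 2 ≤ n) (hd : 4 ≤ d) :
    ({a : Fin (n + 1) → ℕ | ∃ i, a = fun j => if j = i then d else 0}
      ∪ {a | (∑ j, a j = d) ∧ ∃ t : Fin (n + 1), 1 ≤ (t : ℕ) ∧ (t : ℕ) ≤ n - 2 ∧
          1 ≤ a t ∧ ∀ j, a j ≠ 0 → (t : ℕ) ≤ (j : ℕ)}
      ∪ {a | (∑ j, a j = d) ∧ a 0 = 3 ∧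
          ∀ j, a j ≠ 0 → j = 0 ∨ n - 1 ≤ (j : ℕ)}).ncard
      = (n + d - 1).choose (n - 1) := by
  classical
  set p1 : Fin (n + 1) := ⟨n - 1, by omega⟩ with hp1
  set p2 : Fin (n + 1) := ⟨n, by omega⟩ with hp2
  have hv1 : (p1 : ℕ) = n - 1 := by rw [hp1]
  have hv2 : (p2 : ℕ) = n := by rw [hp2]
  have hp12 : p1 ≠ p2 := by intro h; rw [Fin.ext_iff, hv1, hv2] at h; omega
  have hp01 : (0 : Fin (n + 1)) ≠ p1 := by
    intro h; rw [Fin.ext_iff, Fin.val_zero, hv1] at h; omega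
  have hp02 : (0 : Fin (n + 1)) ≠ p2 := by
    intro h; rw [Fin.ext_iff, Fin.val_zero, hv2] at h; omega
  have hbig : ∀ j : Fin (n + 1), n - 1 ≤ (j : ℕ) → j = p1 ∨ j = p2 := by
    intro j hj
    have := j.isLt
    rcases Nat.lt_or_ge (j : ℕ) n with h | h
    · left; exact Fin.ext (by rw [hv1]; omega)
    · right; exact Fin.ext (by rw [hv2]; omega)
  -- B = T \ D
  have hBTD : {a : Fin (n + 1) → ℕ | (∑ j, a j = d) ∧ ∃ t : Fin (n + 1), 1 ≤ (t : ℕ) ∧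
        (t : ℕ) ≤ n - 2 ∧ 1 ≤ a t ∧ ∀ j, a j ≠ 0 → (t : ℕ) ≤ (j : ℕ)}
      = {a : Fin (n + 1) → ℕ | (∑ j, a j = d) ∧ a 0 = 0}
        \ {a : Fin (n + 1) → ℕ | (∑ j, a j = d) ∧ ∀ j, a j ≠ 0 → n - 1 ≤ (j : ℕ)} := by
    ext a
    constructor
    · rintro ⟨hsum, t, ht1, ht2, hat, hsupp⟩
      have ha0 : a 0 = 0 := by
        by_contra h
        have := hsupp 0 h
        simp only [Fin.val_zero] at this
        omega
      refine ⟨⟨hsum, ha0⟩, ?_⟩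
      rintro ⟨-, hs⟩
      have := hs t (by omega)
      omega
    · rintro ⟨⟨hsum, ha0⟩, hnD⟩
      refine ⟨hsum, ?_⟩
      have hex : ∃ j, a j ≠ 0 ∧ (j : ℕ) < n - 1 := by
        by_contra h
        push_neg at h
        exact hnD ⟨hsum, fun j hj => h j hj⟩
      obtain ⟨j0, hj0, hj0v⟩ := hex
      set s : Finset (Fin (n + 1)) := Finset.univ.filter (fun j => a j ≠ 0) with hs
      have hsne : s.Nonempty := ⟨j0, by simp [hs, hj0]⟩
      set t := s.min' hsne with htdef
      have htmem : a t ≠ 0 := by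
        have := s.min'_mem hsne
        simp only [hs, Finset.mem_filter] at this
        exact this.2
      have htle : ∀ j, a j ≠ 0 → t ≤ j := by
        intro j hj
        exact s.min'_le j (by simp [hs, hj])
      have htj0 : (t : ℕ) ≤ (j0 : ℕ) := htle j0 hj0
      refine ⟨t, ?_, by omega, by omega, fun j hj => htle j hj⟩
      have ht0 : t ≠ 0 := fun h => htmem (h ▸ ha0)
      have : (t : ℕ) ≠ 0 := fun h => ht0 (Fin.ext h)
      omega
  -- main set identity
  have hmain : ({a : Fin (n + 1) → ℕ | ∃ i, a = fun j => if j = i then d else 0}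
      ∪ {a | (∑ j, a j = d) ∧ ∃ t : Fin (n + 1), 1 ≤ (t : ℕ) ∧ (t : ℕ) ≤ n - 2 ∧
          1 ≤ a t ∧ ∀ j, a j ≠ 0 → (t : ℕ) ≤ (j : ℕ)}
      ∪ {a | (∑ j, a j = d) ∧ a 0 = 3 ∧
          ∀ j, a j ≠ 0 → j = 0 ∨ n - 1 ≤ (j : ℕ)})
      = ({a : Fin (n + 1) → ℕ | (∑ j, a j = d) ∧ a 0 = 0}
          \ {a : Fin (n + 1) → ℕ | (∑ j, a j = d) ∧ ∀ j, a j ≠ 0 → n - 1 ≤ (j : ℕ)})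
        ∪ (({fun j => if j = (0 : Fin (n + 1)) then d else 0,
             fun j => if j = p1 then d else 0,
             fun j => if j = p2 then d else 0} : Set (Fin (n + 1) → ℕ))
          ∪ {a | (∑ j, a j = d) ∧ a 0 = 3 ∧
              ∀ j, a j ≠ 0 → j = 0 ∨ n - 1 ≤ (j : ℕ)}) := by
    ext a
    constructor
    · rintro ((⟨i, rfl⟩ | hB') | hC')
      · rcases Nat.lt_or_ge (i : ℕ) 1 with h | h
        · have hi0 : i = 0 := Fin.ext (by simp only [Fin.val_zero]; omega)
          subst hi0
          exact Or.inr (Or.inl (Or.inl rfl))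
        rcases Nat.lt_or_ge (i : ℕ) (n - 1) with h2 | h2
        · left
          refine ⟨⟨by simp, ?_⟩, ?_⟩
          · have h0i : (0 : Fin (n + 1)) ≠ i := by
              intro hh
              rw [← hh, Fin.val_zero] at h
              omega
            simp [h0i]
          · rintro ⟨-, hs⟩
            have hii : (if i = i then d else 0) ≠ 0 := by simp; omega
            have := hs i hii
            omega
        · rcases hbig i h2 with rfl | rfl
          · exact Or.inr (Or.inl (Or.inr (Or.inl rfl)))
          · exact Or.inr (Or.inl (Or.inr (Or.inr rfl)))
      · left; rw [← hBTD]; exact hB'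
      · right; right; exact hC'
    · rintro (hTD | ((rfl | rfl | rfl) | hC'))
      · left; right; rw [hBTD]; exact hTD
      · exact Or.inl (Or.inl ⟨0, rfl⟩)
      · exact Or.inl (Or.inl ⟨p1, rfl⟩)
      · exact Or.inl (Or.inl ⟨p2, rfl⟩)
      · right; exact hC'
  rw [hmain]
  -- finiteness
  have hfinAll : {a : Fin (n + 1) → ℕ | ∑ j, a j = d}.Finite := by
    apply Set.Finite.ofFinset (Finset.Nat.antidiagonalTuple (n + 1) d)
    intro a
    simp [Finset.Nat.mem_antidiagonalTuple]
  have hTfin : {a : Fin (n + 1) → ℕ | (∑ j, a j = d) ∧ a 0 = 0}.Finite :=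
    hfinAll.subset (fun a ha => ha.1)
  have hDfin : {a : Fin (n + 1) → ℕ | (∑ j, a j = d) ∧
      ∀ j, a j ≠ 0 → n - 1 ≤ (j : ℕ)}.Finite := hfinAll.subset (fun a ha => ha.1)
  have hCfin : {a : Fin (n + 1) → ℕ | (∑ j, a j = d) ∧ a 0 = 3 ∧
      ∀ j, a j ≠ 0 → j = 0 ∨ n - 1 ≤ (j : ℕ)}.Finite := hfinAll.subset (fun a ha => ha.1)
  have hRfin : (({fun j => if j = (0 : Fin (n + 1)) then d else 0,
      fun j => if j = p1 then d else 0,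
      fun j => if j = p2 then d else 0} : Set (Fin (n + 1) → ℕ))
      ∪ {a | (∑ j, a j = d) ∧ a 0 = 3 ∧
          ∀ j, a j ≠ 0 → j = 0 ∨ n - 1 ≤ (j : ℕ)}).Finite := by
    apply Set.Finite.union _ hCfin
    exact (Set.finite_singleton _).insert _ |>.insert _
  -- D ⊆ T
  have hDT : {a : Fin (n + 1) → ℕ | (∑ j, a j = d) ∧ ∀ j, a j ≠ 0 → n - 1 ≤ (j : ℕ)}
      ⊆ {a : Fin (n + 1) → ℕ | (∑ j, a j = d) ∧ a 0 = 0} := by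
    rintro a ⟨hsum, hsupp⟩
    refine ⟨hsum, ?_⟩
    by_contra h
    have := hsupp 0 h
    simp only [Fin.val_zero] at this
    omega
  -- disjointness of T \ D and R
  have hdisj : Disjoint
      ({a : Fin (n + 1) → ℕ | (∑ j, a j = d) ∧ a 0 = 0}
        \ {a : Fin (n + 1) → ℕ | (∑ j, a j = d) ∧ ∀ j, a j ≠ 0 → n - 1 ≤ (j : ℕ)})
      (({fun j => if j = (0 : Fin (n + 1)) then d else 0,
         fun j => if j = p1 then d else 0,
         fun j => if j = p2 then d else 0} : Set (Fin (n + 1) → ℕ))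
        ∪ {a | (∑ j, a j = d) ∧ a 0 = 3 ∧
            ∀ j, a j ≠ 0 → j = 0 ∨ n - 1 ≤ (j : ℕ)}) := by
    rw [Set.disjoint_right]
    rintro a ((rfl | rfl | rfl) | hC') ⟨⟨hsum, ha0⟩, hnD⟩
    · simp at ha0; omega
    · refine hnD ⟨hsum, ?_⟩
      intro j hj
      have hjp : j = p1 := by
        by_contra h
        simp [h] at hj
      rw [hjp, hv1]
    · refine hnD ⟨hsum, ?_⟩
      intro j hj
      have hjp : j = p2 := by
        by_contra h
        simp [h] at hj
      rw [hjp, hv2]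
      omega
    · rw [hC'.2.1] at ha0; omega
  -- disjointness of the triple and C
  have hdisj2 : Disjoint
      ({fun j => if j = (0 : Fin (n + 1)) then d else 0,
        fun j => if j = p1 then d else 0,
        fun j => if j = p2 then d else 0} : Set (Fin (n + 1) → ℕ))
      {a | (∑ j, a j = d) ∧ a 0 = 3 ∧
          ∀ j, a j ≠ 0 → j = 0 ∨ n - 1 ≤ (j : ℕ)} := by
    rw [Set.disjoint_right]
    rintro a ⟨hsum, ha0, hsupp⟩ (rfl | rfl | rfl)
    · simp at ha0; omega
    · simp [hp01] at ha0
    · simp [hp02] at ha0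
  -- card of the triple
  have htriple : ({fun j => if j = (0 : Fin (n + 1)) then d else 0,
      fun j => if j = p1 then d else 0,
      fun j => if j = p2 then d else 0} : Set (Fin (n + 1) → ℕ)).ncard = 3 := by
    have h01 : (fun j => if j = (0 : Fin (n + 1)) then d else 0)
        ≠ (fun j => if j = p1 then d else 0) := by
      intro h
      have := congrFun h 0
      simp [hp01] at this
      omega
    have h02 : (fun j => if j = (0 : Fin (n + 1)) then d else 0)
        ≠ (fun j => if j = p2 then d else 0) := by
      intro h
      have := congrFun h 0
      simp [hp02] at this
      omega
    have h12 : (fun j => if j = p1 then d else 0)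
        ≠ (fun j => if j = p2 then d else 0) := by
      intro h
      have := congrFun h p1
      simp [hp12] at this
      omega
    have hmem1 : (fun j => if j = (0 : Fin (n + 1)) then d else 0)
        ∉ ({fun j => if j = p1 then d else 0,
            fun j => if j = p2 then d else 0} : Set (Fin (n + 1) → ℕ)) := by
      intro h
      rcases h with h | h
      · exact h01 h
      · exact h02 h
    have hmem2 : (fun j => if j = p1 then d else 0)
        ∉ ({fun j => if j = p2 then d else 0} : Set (Fin (n + 1) → ℕ)) := by
      intro h
      exact h12 h
    rw [Set.ncard_insert_of_notMem hmem1, Set.ncard_insert_of_notMem hmem2,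
      Set.ncard_singleton]
  -- assemble
  rw [Set.ncard_union_eq hdisj hTfin.diff hRfin,
    Set.ncard_diff hDT hDfin,
    Set.ncard_union_eq hdisj2 ((Set.finite_singleton _).insert _ |>.insert _) hCfin,
    htriple, card_T n d hn, card_D n d hn hd, card_C n d hn hd]
  have hle : d + 1 ≤ (n + d - 1).choose (n - 1) := by
    have h1 := Set.ncard_le_ncard hDT hTfin
    rw [card_T n d hn, card_D n d hn hd] at h1
    exact h1
  omega
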